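/- Let f be in the class BT_B with Taylor coefficients a_n, and let Γ_1 = −a_2/2, Γ_2 = −(1/2)(a_3 − (3/2)a_2²) be the first two logarithmic coefficients of the inverse function of f. Then |Γ_2| − |Γ_1| ≥ −1/(2·√29). -/

import Mathlib

open Complex Metric

lemma my_cosh_ne_zero {w : ℂ} (hw : ‖w‖ < 1) : Complex.cosh w ≠ 0 := by
  intro h
  rw [← Complex.cos_mul_I] at h
  obtain ⟨k, hk⟩ := Complex.cos_eq_zero_iff.mp h
  have h1 : ‖w * I‖ = ‖w‖ := by simp
  rw [hk] at h1
  have h2 : ((2 * (k : ℂ) + 1) * (Real.pi : ℂ) / 2) = (((2 * (k : ℝ) + 1) * Real.pi / 2 : ℝ) : ℂ) := by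
    push_cast; ring
  rw [h2, Complex.norm_real, Real.norm_eq_abs] at h1
  have hk1 : (1 : ℝ) ≤ |2 * (k : ℝ) + 1| := by
    have : (2 * k + 1 : ℤ) ≠ 0 := by omega
    have := Int.one_le_abs this
    calc (1:ℝ) ≤ |(2 * k + 1 : ℤ)| := by exact_mod_cast this
      _ = |2 * (k:ℝ) + 1| := by push_cast; ring_nf
  have hpi : (3:ℝ) ≤ Real.pi := Real.pi_gt_three.le
  have : (1:ℝ) < |(2 * (k : ℝ) + 1) * Real.pi / 2| := by
    rw [abs_div, abs_mul, _root_.abs_of_nonneg Real.pi_pos.le]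
    rw [show |(2:ℝ)| = 2 by norm_num]
    nlinarith
  linarith

lemma my_one_add_tanh_ne_zero {w : ℂ} (h : Complex.cosh w ≠ 0) : 1 + Complex.tanh w ≠ 0 := by
  rw [Complex.tanh_eq_sinh_div_cosh]
  have h2 : 1 + Complex.sinh w / Complex.cosh w = Complex.exp w / Complex.cosh w := by
    rw [← Complex.cosh_add_sinh]; field_simp
  rw [h2]
  exact div_ne_zero (Complex.exp_ne_zero w) h

lemma my_hasDerivAt_tanh {w : ℂ} (h : Complex.cosh w ≠ 0) :
    HasDerivAt Complex.tanh (1 - Complex.tanh w ^ 2) w := by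
  have hd : HasDerivAt (fun x => Complex.sinh x / Complex.cosh x) _ w := (Complex.hasDerivAt_sinh w).div (Complex.hasDerivAt_cosh w) h
  have hfun : Complex.tanh = fun x => Complex.sinh x / Complex.cosh x :=
    funext fun x => Complex.tanh_eq_sinh_div_cosh x
  rw [hfun]
  convert hd using 1
  show 1 - (Complex.sinh w / Complex.cosh w) ^ 2 = _
  field_simp

/-- Schwarz–Pick type bound on the second Taylor coefficient of a Schwarz function. -/
lemma schwarz_pick_two {ω : ℂ → ℂ} (hωa : AnalyticOnNhd ℂ ω (ball 0 1)) (hω0 : ω 0 = 0)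
    (hω1 : ∀ z ∈ ball (0:ℂ) 1, ‖ω z‖ < 1) :
    ‖deriv (dslope ω 0) 0‖ ≤ 1 - ‖deriv ω 0‖ ^ 2 := by
  have h0s : (0:ℂ) ∈ ball (0:ℂ) 1 := mem_ball_self one_pos
  have hωd : DifferentiableOn ℂ ω (ball 0 1) := hωa.differentiableOn
  have hmaps : Set.MapsTo ω (ball 0 1) (ball (ω 0) 1) := by
    intro z hz
    rw [hω0, mem_ball_zero_iff]
    simpa using hω1 z hz
  set ψ := dslope ω 0 with hψdef
  have hψd : DifferentiableOn ℂ ψ (ball 0 1) :=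
    (differentiableOn_dslope (isOpen_ball.mem_nhds h0s)).mpr hωd
  have hψle : ∀ z ∈ ball (0:ℂ) 1, ‖ψ z‖ ≤ 1 := by
    intro z hz
    have := Complex.norm_dslope_le_div_of_mapsTo_ball hωd (hmaps.mono_right ball_subset_closedBall) hz
    simpa using this
  have hψ0 : ψ 0 = deriv ω 0 := dslope_same ω 0
  by_cases hlt : ∀ z ∈ ball (0:ℂ) 1, ‖ψ z‖ < 1
  · -- strict case: Möbius trick
    have hc1lt : ‖deriv ω 0‖ < 1 := hψ0 ▸ hlt 0 h0s
    set a := deriv ω 0 with ha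
    have hkey : ∀ w : ℂ, ‖w‖ < 1 →
        Complex.normSq (w - a) < Complex.normSq (1 - (starRingEnd ℂ) a * w) := by
      intro w hw
      have hid : (1 - (starRingEnd ℂ) a * w) * (starRingEnd ℂ) (1 - (starRingEnd ℂ) a * w)
          - (w - a) * (starRingEnd ℂ) (w - a)
          = (1 - a * (starRingEnd ℂ) a) * (1 - w * (starRingEnd ℂ) w) := by
        simp only [map_sub, map_mul, map_one, Complex.conj_conj]
        ring
      rw [Complex.mul_conj, Complex.mul_conj, Complex.mul_conj, Complex.mul_conj] at hid
      have hreal : Complex.normSq (1 - (starRingEnd ℂ) a * w) - Complex.normSq (w - a)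
          = (1 - Complex.normSq a) * (1 - Complex.normSq w) := by exact_mod_cast hid
      have h1 : Complex.normSq a < 1 := by
        rw [← Complex.sq_norm]; nlinarith [norm_nonneg a]
      have h2 : Complex.normSq w < 1 := by
        rw [← Complex.sq_norm]; nlinarith [norm_nonneg w]
      nlinarith [hreal, h1, h2]
    have hden : ∀ w : ℂ, ‖w‖ < 1 → (1 - (starRingEnd ℂ) a * w) ≠ 0 := by
      intro w hw h
      have h2 := hkey w hw
      rw [h, map_zero] at h2
      exact absurd h2 (not_lt.mpr (Complex.normSq_nonneg _))
    set m := fun z => (ψ z - a) / (1 - (starRingEnd ℂ) a * ψ z) with hm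
    have hmd : DifferentiableOn ℂ m (ball 0 1) := by
      apply DifferentiableOn.div (hψd.sub_const a)
        ((differentiableOn_const 1).sub ((differentiableOn_const _).mul hψd))
      exact fun z hz => hden _ (hlt z hz)
    have hm0 : m 0 = 0 := by simp [hm, hψ0, ← ha]
    have hmmaps : Set.MapsTo m (ball 0 1) (ball (m 0) 1) := by
      intro z hz
      rw [hm0, mem_ball_zero_iff]
      have hk := hkey (ψ z) (hlt z hz)
      have hdnz := hden (ψ z) (hlt z hz)
      show ‖(ψ z - a) / (1 - (starRingEnd ℂ) a * ψ z)‖ < 1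
      rw [norm_div, div_lt_one (norm_pos_iff.mpr hdnz)]
      rw [Complex.norm_def, Complex.norm_def]
      exact Real.sqrt_lt_sqrt (Complex.normSq_nonneg _) hk
    have hsch := Complex.norm_deriv_le_div_of_mapsTo_ball hmd (hmmaps.mono_right ball_subset_closedBall) one_pos
    have hψ0' : HasDerivAt ψ (deriv ψ 0) 0 :=
      (hψd.differentiableAt (isOpen_ball.mem_nhds h0s)).hasDerivAt
    have hnum : HasDerivAt (fun z => ψ z - a) (deriv ψ 0) 0 := hψ0'.sub_const a
    have hdenD : HasDerivAt (fun z => 1 - (starRingEnd ℂ) a * ψ z)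
        (-((starRingEnd ℂ) a * deriv ψ 0)) 0 := by
      simpa using (hψ0'.const_mul ((starRingEnd ℂ) a)).const_sub 1
    have hden0 : (1 - (starRingEnd ℂ) a * ψ 0) ≠ 0 := hden _ (hlt 0 h0s)
    have hdenA : (1 - (starRingEnd ℂ) a * a) ≠ 0 := hden a hc1lt
    have hmD := hnum.fun_div hdenD hden0
    have hval : deriv m 0 = deriv ψ 0 / (1 - (starRingEnd ℂ) a * a) := by
      rw [hmD.deriv, hψ0]
      field_simp
      ring
    rw [hval] at hsch
    have h1a : ((1 : ℂ) - (starRingEnd ℂ) a * a) = ((1 - Complex.normSq a : ℝ) : ℂ) := by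
      rw [mul_comm, Complex.mul_conj]; push_cast; ring
    have hnsq : Complex.normSq a < 1 := by
      rw [← Complex.sq_norm]; nlinarith [norm_nonneg a]
    have habsden : ‖1 - (starRingEnd ℂ) a * a‖ = 1 - Complex.normSq a := by
      rw [h1a, Complex.norm_real, Real.norm_eq_abs, _root_.abs_of_nonneg (by linarith)]
    rw [norm_div, habsden] at hsch
    have hsch' : ‖deriv ψ 0‖ / (1 - Complex.normSq a) ≤ 1 := by simpa using hsch
    rw [div_le_one (by linarith)] at hsch'
    calc ‖deriv ψ 0‖ ≤ 1 - Complex.normSq a := hsch'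
    _ = 1 - ‖a‖ ^ 2 := by rw [Complex.sq_norm]
  · -- max modulus case: ψ constant of modulus 1
    push_neg at hlt
    obtain ⟨z0, hz0, hge⟩ := hlt
    have heq1 : ‖ψ z0‖ = 1 := le_antisymm (hψle z0 hz0) hge
    have hmax : IsMaxOn (norm ∘ ψ) (ball 0 1) z0 := by
      intro z hz
      simp only [Function.comp_apply, Set.mem_setOf_eq]
      rw [heq1]
      exact hψle z hz
    have hconst := Complex.eqOn_of_isPreconnected_of_isMaxOn_norm
      (convex_ball (0:ℂ) 1).isPreconnected isOpen_ball hψd hz0 hmax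
    have hd0 : deriv ψ 0 = 0 := by
      have hev : ψ =ᶠ[nhds 0] (fun _ => ψ z0) := by
        filter_upwards [isOpen_ball.mem_nhds h0s] with x hx using hconst hx
      rw [hev.deriv_eq, deriv_const]
    have habs : ‖deriv ω 0‖ = 1 := by
      rw [← hψ0, hconst h0s]
      exact heq1
    rw [hd0, habs]
    simp

/-- Principal branch of the square root: `w^(1/2) = exp((1/2) * Log w)`. -/
noncomputable def psqrt (w : ℂ) : ℂ := Complex.exp ((1/2 : ℂ) * Complex.log w)

/-- The `n`-th Taylor coefficient of `f` at `0`, i.e. `f^(n)(0)/n!`. -/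
noncomputable def tCoeff (f : ℂ → ℂ) (n : ℕ) : ℂ := iteratedDeriv n f 0 / n.factorial

/-- The class `BT_B` of bounded turning functions associated with the bean-shaped domain:
`f` is analytic on the unit disk, `f 0 = 0`, `f' 0 = 1`, `f` injective on the disk,
and `f'(z) = (1 + tanh (ω z))^(1/2)` for a Schwarz function `ω`. -/
def IsBTB (f : ℂ → ℂ) : Prop :=
  AnalyticOnNhd ℂ f (ball 0 1) ∧ f 0 = 0 ∧ deriv f 0 = 1 ∧
  Set.InjOn f (ball 0 1) ∧
  ∃ ω : ℂ → ℂ, AnalyticOnNhd ℂ ω (ball 0 1) ∧ ω 0 = 0 ∧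
    (∀ z ∈ ball (0:ℂ) 1, ‖ω z‖ < 1) ∧
    (∀ z ∈ ball (0:ℂ) 1, deriv f z = psqrt (1 + Complex.tanh (ω z)))

set_option maxHeartbeats 1000000 in
theorem BTB_Gamma_diff_lower (f : ℂ → ℂ) (hf : IsBTB f) :
    ‖-(1/2) * (tCoeff f 3 - (3/2) * (tCoeff f 2)^2)‖
      - ‖-(tCoeff f 2) / 2‖ ≥ -(1 / (2 * Real.sqrt 29)) := by
  obtain ⟨hfa, hf0, hf1, hinj, ω, hωa, hω0, hω1, hfd⟩ := hf
  set s : Set ℂ := ball 0 1 with hs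
  have hsopen : IsOpen s := isOpen_ball
  have h0s : (0:ℂ) ∈ s := mem_ball_self one_pos
  have hs0 : s ∈ nhds (0:ℂ) := hsopen.mem_nhds h0s
  set g : ℂ → ℂ := deriv f with hgdef
  have hg : AnalyticOnNhd ℂ g s := hfa.deriv
  have hg' : AnalyticOnNhd ℂ (deriv g) s := hg.deriv
  have hω' : AnalyticOnNhd ℂ (deriv ω) s := hωa.deriv
  have hg0 : g 0 = 1 := hf1
  -- the squared identity
  have hcosh : ∀ z ∈ s, Complex.cosh (ω z) ≠ 0 := fun z hz => my_cosh_ne_zero (hω1 z hz)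
  have hgsq : ∀ z ∈ s, g z ^ 2 = 1 + Complex.tanh (ω z) := by
    intro z hz
    have hne : 1 + Complex.tanh (ω z) ≠ 0 := my_one_add_tanh_ne_zero (hcosh z hz)
    rw [hfd z hz, psqrt]
    rw [← Complex.exp_nat_mul]
    rw [show ((2:ℕ):ℂ) * ((1/2 : ℂ) * Complex.log (1 + Complex.tanh (ω z)))
        = Complex.log (1 + Complex.tanh (ω z)) by push_cast; ring]
    exact Complex.exp_log hne
  -- derivative of 1 + tanh ∘ ω
  have htanh : ∀ z ∈ s, HasDerivAt (fun x => 1 + Complex.tanh (ω x))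
      ((1 - Complex.tanh (ω z) ^ 2) * deriv ω z) z := by
    intro z hz
    have h1 := (my_hasDerivAt_tanh (hcosh z hz)).comp z ((hωa z hz).differentiableAt.hasDerivAt)
    exact h1.const_add 1
  -- first differentiated identity
  have hD1 : ∀ z ∈ s, 2 * g z * deriv g z = (1 - Complex.tanh (ω z) ^ 2) * deriv ω z := by
    intro z hz
    have h1 : HasDerivAt (fun x => g x ^ 2) (2 * g z * deriv g z) z := by
      have := ((hg z hz).differentiableAt.hasDerivAt).fun_pow 2
      simpa [pow_one] using this
    have heq : (fun x => g x ^ 2) =ᶠ[nhds z] (fun x => 1 + Complex.tanh (ω x)) := by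
      filter_upwards [hsopen.mem_nhds hz] with x hx using hgsq x hx
    rw [← h1.deriv, heq.deriv_eq, (htanh z hz).deriv]
  -- value of deriv g at 0
  have e1 : deriv g 0 = deriv ω 0 / 2 := by
    have := hD1 0 h0s
    rw [hg0, hω0, Complex.tanh_zero] at this
    norm_num at this
    linear_combination this / 2
  -- second differentiated identity at 0
  have hLR : (fun z => 2 * g z * deriv g z)
      =ᶠ[nhds 0] (fun z => (1 - Complex.tanh (ω z) ^ 2) * deriv ω z) := by
    filter_upwards [hs0] with x hx using hD1 x hx
  have hgd0 : HasDerivAt g (deriv g 0) 0 := (hg 0 h0s).differentiableAt.hasDerivAt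
  have hgd0' : HasDerivAt (deriv g) (deriv (deriv g) 0) 0 := (hg' 0 h0s).differentiableAt.hasDerivAt
  have hL : HasDerivAt (fun z => 2 * g z * deriv g z)
      (2 * (deriv g 0 * deriv g 0 + g 0 * deriv (deriv g) 0)) 0 := by
    have := (hgd0.mul hgd0').const_mul (2:ℂ)
    simpa [mul_assoc] using this
  have hωd0 : HasDerivAt ω (deriv ω 0) 0 := (hωa 0 h0s).differentiableAt.hasDerivAt
  have hωd0' : HasDerivAt (deriv ω) (deriv (deriv ω) 0) 0 :=
    (hω' 0 h0s).differentiableAt.hasDerivAt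
  have hu : HasDerivAt (fun x => Complex.tanh (ω x))
      ((1 - Complex.tanh (ω 0) ^ 2) * deriv ω 0) 0 :=
    (my_hasDerivAt_tanh (hcosh 0 h0s)).comp 0 hωd0
  have hA : HasDerivAt (fun z => 1 - Complex.tanh (ω z) ^ 2)
      (-(2 * Complex.tanh (ω 0) ^ 1 * ((1 - Complex.tanh (ω 0) ^ 2) * deriv ω 0))) 0 := by
    have := (hu.pow 2).const_sub 1
    simpa using this
  have hR : HasDerivAt (fun z => (1 - Complex.tanh (ω z) ^ 2) * deriv ω z)
      (deriv (deriv ω) 0) 0 := by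
    have h2 := hA.fun_mul hωd0'
    rw [hω0, Complex.tanh_zero] at h2
    simpa using h2
  have e2 : 2 * (deriv g 0 * deriv g 0 + g 0 * deriv (deriv g) 0) = deriv (deriv ω) 0 := by
    rw [← hL.deriv, hLR.deriv_eq, hR.deriv]
  -- iterated derivative identifications
  have hiter2 : iteratedDeriv 2 f 0 = deriv g 0 := by
    rw [show (2:ℕ) = 1+1 from rfl, iteratedDeriv_succ, iteratedDeriv_one]
  have hiter3 : iteratedDeriv 3 f 0 = deriv (deriv g) 0 := by
    rw [show (3:ℕ) = 2+1 from rfl, iteratedDeriv_succ,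
        show (2:ℕ) = 1+1 from rfl, iteratedDeriv_succ, iteratedDeriv_one]
  -- power series of ω : second derivative vs dslope derivative
  obtain ⟨p, hp⟩ := hωa 0 h0s
  have hψp : HasFPowerSeriesAt (dslope ω 0) p.fslope 0 := hp.has_fpower_series_dslope_fslope
  have hdψ2 : deriv (dslope ω 0) 0 = p.coeff 2 := by
    rw [hψp.deriv]
    exact FormalMultilinearSeries.coeff_fslope
  have hd2coeff : deriv (deriv ω) 0 = 2 * p.coeff 2 := by
    obtain ⟨r, hpr⟩ := hp
    have hfac := hpr.factorial_smul (1:ℂ) 2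
    have hi : deriv (deriv ω) 0 = (iteratedFDeriv ℂ 2 ω 0 : (Fin 2 → ℂ) → ℂ) fun _ => 1 := by
      rw [← iteratedDeriv_eq_iteratedFDeriv, show (2:ℕ) = 1+1 from rfl, iteratedDeriv_succ,
        iteratedDeriv_one]
    rw [hi, ← hfac]
    have hcoe : p 2 (fun _ => (1:ℂ)) = p.coeff 2 := rfl
    rw [hcoe]
    simp [Nat.factorial]
  -- Taylor coefficients of f
  have hA2 : tCoeff f 2 = deriv ω 0 / 4 := by
    rw [tCoeff, hiter2, e1]
    norm_num [Nat.factorial]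
    ring
  have hA3 : tCoeff f 3 = (deriv (dslope ω 0) 0 - (deriv ω 0) ^ 2 / 4) / 6 := by
    rw [tCoeff, hiter3]
    rw [hdψ2]
    have : deriv (deriv g) 0 = p.coeff 2 - (deriv ω 0) ^ 2 / 4 := by
      rw [e1, hg0] at e2
      rw [hd2coeff] at e2
      linear_combination e2 / 2
    rw [this]
    norm_num [Nat.factorial]
  -- abbreviations
  set c1 := deriv ω 0 with hc1
  set dψ := deriv (dslope ω 0) 0 with hdψdef
  have habs2 : ‖dψ‖ ≤ 1 - ‖c1‖ ^ 2 := schwarz_pick_two hωa hω0 hω1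
  -- rewrite the goal
  have hGoalEq : -(1/2 : ℂ) * (tCoeff f 3 - (3/2) * (tCoeff f 2) ^ 2)
      = (13/192 : ℂ) * c1 ^ 2 - (1/12 : ℂ) * dψ := by
    rw [hA2, hA3]; ring
  have hG1Eq : -(tCoeff f 2) / 2 = -(c1/4)/2 := by rw [hA2]
  rw [hGoalEq, hG1Eq]
  -- the real inequality
  set t := ‖c1‖ with htdef
  set x := ‖dψ‖ with hxdef
  have ht0 : 0 ≤ t := norm_nonneg c1
  have hx0 : 0 ≤ x := norm_nonneg dψ
  have hG1 : ‖-(c1/4)/2‖ = t / 8 := by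
    rw [show (-(c1/4)/2 : ℂ) = -(c1/8) by ring, norm_neg, norm_div]
    simp [htdef]
  have hG2 : (13/192 : ℝ) * t ^ 2 - (1/12) * x
      ≤ ‖(13/192 : ℂ) * c1 ^ 2 - (1/12 : ℂ) * dψ‖ := by
    have h := norm_sub_norm_le ((13/192 : ℂ) * c1 ^ 2) ((1/12 : ℂ) * dψ)
    rw [norm_mul, norm_mul, norm_pow] at h
    have h13 : ‖(13/192 : ℂ)‖ = 13/192 := by
      rw [show (13/192 : ℂ) = ((13/192 : ℝ) : ℂ) by norm_num, Complex.norm_real, Real.norm_eq_abs]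
      norm_num
    have h12 : ‖(1/12 : ℂ)‖ = 1/12 := by
      rw [show (1/12 : ℂ) = ((1/12 : ℝ) : ℂ) by norm_num, Complex.norm_real, Real.norm_eq_abs]
      norm_num
    rw [h13, h12] at h
    exact h
  rw [hG1]
  set u := Real.sqrt 29 with hu
  have hu2 : u ^ 2 = 29 := Real.sq_sqrt (by norm_num)
  have hu5 : 5 ≤ u := by nlinarith [Real.sqrt_nonneg 29]
  have hu6 : u ≤ 6 := by nlinarith [Real.sqrt_nonneg 29]
  have hu0 : 0 < u := by linarith
  by_cases hcase : t ≤ 4 / u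
  · have h1 : t / 8 ≤ 1 / (2 * u) := by
      rw [div_le_div_iff₀ (by norm_num) (by positivity)]
      calc t * (2 * u) ≤ (4/u) * (2*u) := by
            apply mul_le_mul_of_nonneg_right hcase (by positivity)
        _ = 8 := by field_simp; ring
        _ ≤ 1 * 8 := by norm_num
    have h2 : (0:ℝ) ≤ ‖(13/192 : ℂ) * c1 ^ 2 - (1/12 : ℂ) * dψ‖ :=
      norm_nonneg _
    linarith
  · push_neg at hcase
    have hut : 4 ≤ u * t := by
      rw [div_lt_iff₀ hu0] at hcase
      linarith [hcase]
    have ht23 : 2/3 ≤ t := by nlinarith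
    have h2nd : 0 ≤ 29 * t + 4 * u - 24 := by nlinarith
    have hP : 0 ≤ (u * t - 4) * (29 * t + 4 * u - 24) := mul_nonneg (by linarith) h2nd
    have hcor : u ^ 2 * t = 29 * t := by rw [hu2]
    have key : 0 ≤ 29 * t ^ 2 * u - 16 * u - 24 * t * u + 96 := by nlinarith [hP, hcor]
    have hfrac : (29 * t ^ 2 - 16)/192 - t/8 + 1/(2*u)
        = (29 * t ^ 2 * u - 16 * u - 24 * t * u + 96)/(192 * u) := by
      field_simp
      ring
    have hmain : (29 * t ^ 2 - 16)/192 - t/8 + 1/(2*u) ≥ 0 := by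
      rw [hfrac]
      positivity
    have hlow : (29 * t ^ 2 - 16)/192 ≤ (13/192 : ℝ) * t ^ 2 - (1/12) * x := by
      linarith [habs2]
    linarith [hG2]
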